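/- Technical limit lemma A: Let 0 < Γ(0), Γ(1) < 1, let ρ > 0, and let L : ℕ → ℕ be a ρ-admissible scaling. For any sequence ν_n in [0,1] with ν_n → ν, the sequence (1 − (Γ(1)^{ν_n} Γ(0)^{1−ν_n})^{L_n})^{n−1} converges, as n → ∞, to 0 if 1 + ρ ln(Γ(1)^ν Γ(0)^{1−ν}) > 0, and to 1 if 1 + ρ ln(Γ(1)^ν Γ(0)^{1−ν}) < 0. -/

import Mathlib

open MeasureTheory Filter

/-- Bernoulli measure on `Bool` with parameter `p` = probability of `true`. -/
noncomputable def bern (p : ℝ) : Measure Bool :=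
  (Real.toNNReal p) • Measure.dirac true + (Real.toNNReal (1 - p)) • Measure.dirac false

/-- Uniform distribution on `[0,1]`. -/
noncomputable def unif01 : Measure ℝ := MeasureTheory.volume.restrict (Set.Icc (0:ℝ) 1)

/-- The probability space of the homogeneous binary MAG model `M(n;L)`:
i.i.d. Bernoulli attribute bits and, independently, i.i.d. Uniform(0,1) variables. -/
noncomputable def magMeasure (n L : ℕ) (p : ℝ) :
    Measure ((Fin n → Fin L → Bool) × (Fin n × Fin n → ℝ)) :=
  (Measure.pi fun _ : Fin n => Measure.pi fun _ : Fin L => bern p).prod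
    (Measure.pi fun _ : Fin n × Fin n => unif01)

/-- `Q_L(a,b) = ∏_{ℓ} q(a_ℓ, b_ℓ)`. -/
def QL {L : ℕ} (q : Bool → Bool → ℝ) (a b : Fin L → Bool) : ℝ :=
  ∏ ℓ : Fin L, q (a ℓ) (b ℓ)

/-- Distinct nodes `u, v` are adjacent iff `U(u,v) ≤ Q_L(A(u),A(v))`, where the uniform
variable attached to the unordered pair `{u,v}` is the one indexed by `(min u v, max u v)`. -/
def Adj {n L : ℕ} (q : Bool → Bool → ℝ)
    (ω : (Fin n → Fin L → Bool) × (Fin n × Fin n → ℝ)) (u v : Fin n) : Prop :=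
  u ≠ v ∧ ω.2 (min u v, max u v) ≤ QL q (ω.1 u) (ω.1 v)

/-- Node `u` is isolated if it is adjacent to no other node. -/
def Isolated {n L : ℕ} (q : Bool → Bool → ℝ)
    (ω : (Fin n → Fin L → Bool) × (Fin n × Fin n → ℝ)) (u : Fin n) : Prop :=
  ∀ v, ¬ Adj q ω u v

/-- `S_L(u)`: the number of attributes exhibited by node `u`. -/
def Scount {n L : ℕ} (ω : (Fin n → Fin L → Bool) × (Fin n × Fin n → ℝ)) (u : Fin n) : ℕ :=
  (Finset.univ.filter fun ℓ : Fin L => ω.1 u ℓ = true).card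

open scoped Classical in
/-- `I_n(L)`: the number of isolated nodes. -/
noncomputable def numIsolated {n L : ℕ} (q : Bool → Bool → ℝ)
    (ω : (Fin n → Fin L → Bool) × (Fin n × Fin n → ℝ)) : ℕ :=
  (Finset.univ.filter fun u : Fin n => Isolated q ω u).card

open scoped Classical in
/-- `I_n^{(k)}(L)`: the number of isolated nodes `u` with `S_L(u) = k`. -/
noncomputable def numIsolatedWith {n L : ℕ} (q : Bool → Bool → ℝ) (k : ℕ)
    (ω : (Fin n → Fin L → Bool) × (Fin n × Fin n → ℝ)) : ℕ :=
  (Finset.univ.filter fun u : Fin n => Isolated q ω u ∧ Scount ω u = k).card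

open scoped Classical in
/-- `ξ^{(k)}(u)`: the indicator that node `u` is isolated and `S_L(u) = k`. -/
noncomputable def xiInd {n L : ℕ} (q : Bool → Bool → ℝ) (k : ℕ)
    (ω : (Fin n → Fin L → Bool) × (Fin n × Fin n → ℝ)) (u : Fin n) : ℝ :=
  if Isolated q ω u ∧ Scount ω u = k then 1 else 0

/-- `Γ(a) = μ(0) q(a,0) + μ(1) q(a,1)`, with `μ(1) = μ1`, `μ(0) = 1 - μ1`. -/
def Gam (μ1 : ℝ) (q : Bool → Bool → ℝ) (a : Bool) : ℝ :=
  (1 - μ1) * q a false + μ1 * q a true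

/-- A scaling `L : ℕ → ℕ` is `ρ`-admissible if `L_n ~ ρ ln n` as `n → ∞`. -/
def Admissible (ρ : ℝ) (L : ℕ → ℕ) : Prop :=
  Asymptotics.IsEquivalent Filter.atTop (fun n => (L n : ℝ)) (fun n => ρ * Real.log n)

/-- `G(ν,μ) = (μ/ν)^ν ((1-μ)/(1-ν))^{1-ν}` (real powers; the conventions at `ν = 0,1`
agree with the continuous extension). -/
noncomputable def Gfun (ν μ : ℝ) : ℝ :=
  (μ / ν) ^ ν * ((1 - μ) / (1 - ν)) ^ (1 - ν)

/-- `Q*_L(a) = E[Q_L(a,A)]`, `A` a vector of `L` i.i.d. Bernoulli(μ1) bits. -/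
noncomputable def Qstar {L : ℕ} (μ1 : ℝ) (q : Bool → Bool → ℝ) (a : Fin L → Bool) : ℝ :=
  ∫ b, QL q a b ∂(Measure.pi fun _ : Fin L => bern μ1)

/-- `Q**_L(a,b) = E[Q_L(a,A) Q_L(b,A)]`. -/
noncomputable def Qstarstar {L : ℕ} (μ1 : ℝ) (q : Bool → Bool → ℝ) (a b : Fin L → Bool) : ℝ :=
  ∫ c, QL q a c * QL q b c ∂(Measure.pi fun _ : Fin L => bern μ1)

/-- `Q̃_L(a,b) = Q*_L(a) + Q*_L(b) − Q**_L(a,b)`. -/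
noncomputable def Qtilde {L : ℕ} (μ1 : ℝ) (q : Bool → Bool → ℝ) (a b : Fin L → Bool) : ℝ :=
  Qstar μ1 q a + Qstar μ1 q b - Qstarstar μ1 q a b

theorem technical_limit_lemma_A
    (Γ0 Γ1 : ℝ) (hΓ0 : Γ0 ∈ Set.Ioo (0:ℝ) 1) (hΓ1 : Γ1 ∈ Set.Ioo (0:ℝ) 1)
    (ρ : ℝ) (hρ : 0 < ρ) (L : ℕ → ℕ) (hL : Admissible ρ L)
    (ν : ℝ) (νseq : ℕ → ℝ) (hνseq : ∀ n, νseq n ∈ Set.Icc (0:ℝ) 1)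
    (hνlim : Tendsto νseq atTop (nhds ν)) :
    (1 + ρ * Real.log (Γ1 ^ ν * Γ0 ^ (1 - ν)) > 0 →
      Tendsto (fun n => (1 - (Γ1 ^ νseq n * Γ0 ^ (1 - νseq n)) ^ L n) ^ (n - 1))
        atTop (nhds 0)) ∧
    (1 + ρ * Real.log (Γ1 ^ ν * Γ0 ^ (1 - ν)) < 0 →
      Tendsto (fun n => (1 - (Γ1 ^ νseq n * Γ0 ^ (1 - νseq n)) ^ L n) ^ (n - 1))

        atTop (nhds 1)) := by
  obtain ⟨hΓ0pos, hΓ0lt⟩ := hΓ0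
  obtain ⟨hΓ1pos, hΓ1lt⟩ := hΓ1
  set c : ℕ → ℝ := fun n => Γ1 ^ νseq n * Γ0 ^ (1 - νseq n) with hc_def
  have hc_pos : ∀ n, 0 < c n := fun n =>
    mul_pos (Real.rpow_pos_of_pos hΓ1pos _) (Real.rpow_pos_of_pos hΓ0pos _)
  set lc : ℕ → ℝ := fun n => νseq n * Real.log Γ1 + (1 - νseq n) * Real.log Γ0 with hlc_def
  have hlc : ∀ n, Real.log (c n) = lc n := fun n => by
    rw [hc_def, hlc_def]
    rw [Real.log_mul (ne_of_gt (Real.rpow_pos_of_pos hΓ1pos _))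
        (ne_of_gt (Real.rpow_pos_of_pos hΓ0pos _)),
      Real.log_rpow hΓ1pos, Real.log_rpow hΓ0pos]
  set l0 : ℝ := ν * Real.log Γ1 + (1 - ν) * Real.log Γ0 with hl0_def
  have hlog_eq : Real.log (Γ1 ^ ν * Γ0 ^ (1 - ν)) = l0 := by
    rw [Real.log_mul (ne_of_gt (Real.rpow_pos_of_pos hΓ1pos _))
        (ne_of_gt (Real.rpow_pos_of_pos hΓ0pos _)),
      Real.log_rpow hΓ1pos, Real.log_rpow hΓ0pos]
  have hν01 : ν ∈ Set.Icc (0:ℝ) 1 :=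
    isClosed_Icc.mem_of_tendsto hνlim (Filter.Eventually.of_forall hνseq)
  have hlogΓ1 : Real.log Γ1 < 0 := Real.log_neg hΓ1pos hΓ1lt
  have hlogΓ0 : Real.log Γ0 < 0 := Real.log_neg hΓ0pos hΓ0lt
  have hl0neg : l0 < 0 := by
    obtain ⟨h0, h1⟩ := hν01
    have hM : max (Real.log Γ1) (Real.log Γ0) < 0 := max_lt hlogΓ1 hlogΓ0
    have h1' : (0:ℝ) ≤ 1 - ν := by linarith
    have : l0 ≤ ν * max (Real.log Γ1) (Real.log Γ0)
        + (1 - ν) * max (Real.log Γ1) (Real.log Γ0) :=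
      add_le_add (mul_le_mul_of_nonneg_left (le_max_left _ _) h0)
        (mul_le_mul_of_nonneg_left (le_max_right _ _) h1')
    nlinarith
  have hlclim : Tendsto lc atTop (nhds l0) := by
    have h1 : Tendsto (fun n => νseq n * Real.log Γ1) atTop (nhds (ν * Real.log Γ1)) :=
      hνlim.mul_const _
    have h2 : Tendsto (fun n => (1 - νseq n) * Real.log Γ0) atTop
        (nhds ((1 - ν) * Real.log Γ0)) := (tendsto_const_nhds.sub hνlim).mul_const _
    exact h1.add h2
  -- log of natural numbers tends to infinity
  have hlogtop : Tendsto (fun n : ℕ => Real.log n) atTop atTop :=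
    Real.tendsto_log_atTop.comp tendsto_natCast_atTop_atTop
  have hρlog : Tendsto (fun n : ℕ => ρ * Real.log n) atTop atTop :=
    hlogtop.const_mul_atTop hρ
  have hLtop : Tendsto (fun n => (L n : ℝ)) atTop atTop := hL.symm.tendsto_atTop hρlog
  have hlogpos : ∀ᶠ n : ℕ in atTop, 0 < Real.log n := by
    filter_upwards [eventually_ge_atTop 2] with n hn
    exact Real.log_pos (by exact_mod_cast hn)
  have hratio1 : Tendsto (fun n => (L n : ℝ) / (ρ * Real.log n)) atTop (nhds 1) := by
    have hne : ∀ᶠ n : ℕ in atTop, ρ * Real.log n ≠ 0 := by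
      filter_upwards [hlogpos] with n hn
      exact ne_of_gt (mul_pos hρ hn)
    exact (Asymptotics.isEquivalent_iff_tendsto_one hne).1 hL
  have hratio : Tendsto (fun n => (L n : ℝ) / Real.log n) atTop (nhds ρ) := by
    have h := hratio1.const_mul ρ
    rw [mul_one] at h
    refine h.congr' ?_
    filter_upwards [hlogpos] with n hn
    field_simp
  -- t n
  set t : ℕ → ℝ := fun n => c n ^ L n with ht_def
  have ht_pos : ∀ n, 0 < t n := fun n => pow_pos (hc_pos n) _
  have ht_exp : ∀ n, t n = Real.exp ((L n : ℝ) * lc n) := fun n => by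
    rw [ht_def]
    rw [← hlc n, Real.exp_nat_mul, Real.exp_log (hc_pos n)]
  have hLlc_bot : Tendsto (fun n => (L n : ℝ) * lc n) atTop atBot := by
    have hev : ∀ᶠ n in atTop, lc n ≤ l0 / 2 :=
      (hlclim.eventually_lt_const (by linarith)).mono fun n hn => hn.le
    have hg : Tendsto (fun n => (L n : ℝ) * (l0 / 2)) atTop atBot :=
      hLtop.atTop_mul_const_of_neg (by linarith)
    refine tendsto_atBot_mono' atTop ?_ hg
    filter_upwards [hev] with n hn
    exact mul_le_mul_of_nonneg_left hn (Nat.cast_nonneg _)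
  have ht0 : Tendsto t atTop (nhds 0) := by
    have := Real.tendsto_exp_atBot.comp hLlc_bot
    exact this.congr fun n => (ht_exp n).symm
  -- the driver g
  set g : ℕ → ℝ := fun n => Real.log ((n : ℝ) - 1) + (L n : ℝ) * lc n with hg_def
  have hsub : Tendsto (fun n : ℕ => Real.log ((n : ℝ) - 1) - Real.log n) atTop (nhds 0) := by
    have hq : Tendsto (fun n : ℕ => ((n : ℝ) - 1) / n) atTop (nhds 1) := by
      have h := (tendsto_const_nhds : Tendsto (fun _ : ℕ => (1:ℝ)) atTop (nhds 1)).sub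
        tendsto_one_div_atTop_nhds_zero_nat
      rw [sub_zero] at h
      refine h.congr' ?_
      filter_upwards [eventually_ge_atTop 1] with n hn
      have : (n : ℝ) ≠ 0 := by positivity
      field_simp
    have hcont : Tendsto Real.log (nhds (1:ℝ)) (nhds 0) := by
      have := (Real.continuousAt_log (by norm_num : (1:ℝ) ≠ 0)).tendsto
      simpa using this
    have h := hcont.comp hq
    refine h.congr' ?_
    filter_upwards [eventually_ge_atTop 2] with n hn
    have h1 : ((n : ℝ) - 1) ≠ 0 := by
      have : (2:ℝ) ≤ n := by exact_mod_cast hn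
      intro h; linarith [h]
    have h2 : (n : ℝ) ≠ 0 := by
      have : (2:ℝ) ≤ n := by exact_mod_cast hn
      positivity
    simp only [Function.comp]
    rw [Real.log_div h1 h2]
  have h1lim : Tendsto (fun n : ℕ => Real.log ((n : ℝ) - 1) / Real.log n) atTop (nhds 1) := by
    have h := (tendsto_const_nhds : Tendsto (fun _ : ℕ => (1:ℝ)) atTop (nhds 1)).add
      (hsub.div_atTop hlogtop)
    rw [add_zero] at h
    refine h.congr' ?_
    filter_upwards [hlogpos] with n hn
    field_simp
    ring
  have h2lim : Tendsto (fun n => (L n : ℝ) / Real.log n * lc n) atTop (nhds (ρ * l0)) :=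
    hratio.mul hlclim
  have hgq : Tendsto (fun n => g n / Real.log n) atTop (nhds (1 + ρ * l0)) := by
    have h := h1lim.add h2lim
    refine h.congr' ?_
    filter_upwards [hlogpos] with n hn
    rw [hg_def]
    field_simp
  have hexp_eq : ∀ᶠ n : ℕ in atTop, ((n : ℝ) - 1) * t n = Real.exp (g n) := by
    filter_upwards [eventually_ge_atTop 2] with n hn
    have hn1 : (0:ℝ) < (n : ℝ) - 1 := by
      have : (2:ℝ) ≤ n := by exact_mod_cast hn
      linarith
    rw [hg_def, Real.exp_add, Real.exp_log hn1, ← ht_exp]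
  have hcast : ∀ᶠ n : ℕ in atTop, ((n - 1 : ℕ) : ℝ) = (n : ℝ) - 1 := by
    filter_upwards [eventually_ge_atTop 1] with n hn
    push_cast [hn]
    ring
  rw [hlog_eq]
  constructor
  · -- positive case: limit 0
    intro hpos
    have hgtop : Tendsto g atTop atTop := by
      have h := hgq.pos_mul_atTop hpos hlogtop
      refine h.congr' ?_
      filter_upwards [hlogpos] with n hn
      field_simp
    have hstop : Tendsto (fun n : ℕ => ((n : ℝ) - 1) * t n) atTop atTop := by
      refine (Real.tendsto_exp_atTop.comp hgtop).congr' ?_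
      filter_upwards [hexp_eq] with n hn
      exact hn.symm
    have hup : Tendsto (fun n : ℕ => Real.exp (-(((n : ℝ) - 1) * t n))) atTop (nhds 0) :=
      Real.tendsto_exp_atBot.comp (tendsto_neg_atBot_iff.mpr hstop)
    refine tendsto_of_tendsto_of_tendsto_of_le_of_le' tendsto_const_nhds hup ?_ ?_
    · filter_upwards [ht0.eventually_lt_const one_pos] with n hn
      exact pow_nonneg (by linarith) _
    · filter_upwards [ht0.eventually_lt_const one_pos, hcast, eventually_ge_atTop 1]
        with n hn hcn hn1
      have hb : 1 - t n ≤ Real.exp (-(t n)) := by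
        have := Real.add_one_le_exp (-(t n))
        linarith
      calc (1 - t n) ^ (n - 1) ≤ Real.exp (-(t n)) ^ (n - 1) :=
            pow_le_pow_left₀ (by linarith) hb _
        _ = Real.exp (((n - 1 : ℕ) : ℝ) * (-(t n))) := (Real.exp_nat_mul _ _).symm
        _ = Real.exp (-(((n : ℝ) - 1) * t n)) := by rw [hcn]; ring_nf
  · -- negative case: limit 1
    intro hneg
    have hgbot : Tendsto g atTop atBot := by
      have h := hgq.neg_mul_atTop hneg hlogtop
      refine h.congr' ?_
      filter_upwards [hlogpos] with n hn
      field_simp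
    have hs0 : Tendsto (fun n : ℕ => ((n : ℝ) - 1) * t n) atTop (nhds 0) := by
      refine (Real.tendsto_exp_atBot.comp hgbot).congr' ?_
      filter_upwards [hexp_eq] with n hn
      exact hn.symm
    have hthalf : ∀ᶠ n in atTop, t n ≤ 1 / 2 :=
      (ht0.eventually_lt_const (by norm_num : (0:ℝ) < 1/2)).mono fun n hn => hn.le
    set e : ℕ → ℝ := fun n => ((n : ℝ) - 1) * Real.log (1 - t n) with he_def
    have he0 : Tendsto e atTop (nhds 0) := by
      have hbnd := hs0.const_mul (2 : ℝ)
      rw [mul_zero] at hbnd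
      refine squeeze_zero_norm' ?_ hbnd
      filter_upwards [hthalf, eventually_ge_atTop 1] with n hn hn1
      have htp := (ht_pos n).le
      have h1t : (0:ℝ) < 1 - t n := by linarith
      have hlogle : Real.log (1 - t n) ≤ 0 :=
        Real.log_nonpos (by linarith) (by linarith)
      have hlogge : -Real.log (1 - t n) ≤ 2 * t n := by
        rw [← Real.log_inv]
        have h2 := Real.log_le_sub_one_of_pos (inv_pos.mpr h1t)
        have h3 : (1 - t n)⁻¹ - 1 = t n / (1 - t n) := by field_simp; ring
        have h4 : t n / (1 - t n) ≤ 2 * t n := by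
          rw [div_le_iff₀ h1t]
          nlinarith
        linarith
      have habs : |Real.log (1 - t n)| ≤ 2 * t n := by
        rw [abs_of_nonpos hlogle]; exact hlogge
      have hn1' : (0:ℝ) ≤ (n : ℝ) - 1 := by
        have : (1:ℝ) ≤ n := by exact_mod_cast hn1
        linarith
      rw [he_def]
      simp only [Real.norm_eq_abs, abs_mul, abs_of_nonneg hn1']
      calc ((n : ℝ) - 1) * |Real.log (1 - t n)| ≤ ((n : ℝ) - 1) * (2 * t n) :=
            mul_le_mul_of_nonneg_left habs hn1'
        _ = 2 * (((n : ℝ) - 1) * t n) := by ring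
    have hfin := (Real.continuous_exp.tendsto 0).comp he0
    rw [Real.exp_zero] at hfin
    refine hfin.congr' ?_
    filter_upwards [ht0.eventually_lt_const one_pos, hcast] with n hn hcn
    have h1t : (0:ℝ) < 1 - t n := by linarith
    simp only [Function.comp, he_def]
    rw [← hcn, Real.exp_nat_mul, Real.exp_log h1t]
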